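/- Let R be a commutative ring and M an R-module with submodules L, N₁, …, N_t such that L, each N_i, each L + N_i, and N = ⋂_{i=1}^t N_i are multiplication modules. Then L + N is a multiplication module. -/

import Mathlib

/-- `M` is a multiplication `R`-module if every submodule `N` of `M` has the form
`N = I • M` for some ideal `I` of `R`. -/
def IsMultiplicationModule (R : Type*) [CommRing R] (M : Type*) [AddCommGroup M]
    [Module R M] : Prop :=
  ∀ N : Submodule R M, ∃ I : Ideal R, N = I • (⊤ : Submodule R M)

namespace MultAux

open Submodule

variable {R : Type*} [CommRing R] {M : Type*} [AddCommGroup M] [Module R M]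

/-- The multiplication property for a submodule, phrased in the ambient module. -/
def Mul'Sub (X : Submodule R M) : Prop :=
  ∀ K : Submodule R M, K ≤ X → ∃ I : Ideal R, K = I • X

lemma isMult_iff_mul' (X : Submodule R M) :
    IsMultiplicationModule R ↥X ↔ Mul'Sub X := by
  constructor
  · intro h K hK
    obtain ⟨I, hI⟩ := h (K.comap X.subtype)
    refine ⟨I, ?_⟩
    have := congrArg (Submodule.map X.subtype) hI
    rwa [Submodule.map_comap_subtype, inf_eq_right.2 hK, Submodule.map_smul'',
      Submodule.map_subtype_top] at this
  · intro h K
    obtain ⟨I, hI⟩ := h (K.map X.subtype) (Submodule.map_subtype_le X K)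
    refine ⟨I, ?_⟩
    apply Submodule.map_injective_of_injective X.injective_subtype
    rw [hI, Submodule.map_smul'', Submodule.map_subtype_top]

lemma colon_smul_le (K X : Submodule R M) : (K.colon X) • X ≤ K :=
  Submodule.smul_le.2 fun r hr n hn => Submodule.mem_colon.1 hr n hn

lemma Mul'Sub.eq_colon {X K : Submodule R M} (h : Mul'Sub X) (hK : K ≤ X) :
    K = (K.colon X) • X := by
  obtain ⟨I, hI⟩ := h K hK
  refine le_antisymm ?_ (colon_smul_le K X)
  have hIc : I ≤ K.colon X := fun r hr =>
    Submodule.mem_colon.2 fun p hp => hI ▸ Submodule.smul_mem_smul hr hp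
  calc K = I • X := hI
    _ ≤ (K.colon X) • X := Submodule.smul_mono_left hIc

lemma exists_one_sub_smul_eq_zero {P : Ideal R} {y : M}
    (hy : y ∈ P • (span R {y} : Submodule R M)) : ∃ p ∈ P, (1 - p) • y = 0 := by
  have hle : P • (span R {y} : Submodule R M) ≤
      Submodule.map (LinearMap.toSpanSingleton R M y) P := by
    refine Submodule.smul_le.2 fun r hr n hn => ?_
    obtain ⟨a, rfl⟩ := mem_span_singleton.1 hn
    refine ⟨r * a, Ideal.mul_mem_right a P hr, ?_⟩
    rw [LinearMap.toSpanSingleton_apply, mul_smul, smul_comm]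
  obtain ⟨c, hc, hcy⟩ := hle hy
  rw [LinearMap.toSpanSingleton_apply] at hcy
  exact ⟨c, hc, by rw [sub_smul, one_smul, hcy, sub_self]⟩

lemma dichotomy {Y : Submodule R M} (h : Mul'Sub Y) {P : Ideal R} (hP : P.IsMaximal) :
    (∀ y ∈ Y, ∃ p ∈ P, (1 - p) • y = 0) ∨
    (∃ w ∈ Y, ∃ p ∈ P, ∀ y ∈ Y, (1 - p) • y ∈ span R {w}) := by
  by_cases hcase : ∀ y ∈ Y, (span R {y} : Submodule R M).colon Y ≤ P
  · left
    have hself : ∀ y ∈ Y, y ∈ ((span R {y} : Submodule R M).colon Y) • Y := by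
      intro y hy
      have e1 := h.eq_colon (span_le.2 (Set.singleton_subset_iff.2 hy))
      exact e1 ▸ mem_span_singleton_self y
    have hYP : Y ≤ P • Y := fun y hy =>
      Submodule.smul_mono_left (hcase y hy) (hself y hy)
    intro y hy
    apply exists_one_sub_smul_eq_zero
    set C := (span R {y} : Submodule R M).colon Y with hC
    have e1 : (span R {y} : Submodule R M) = C • Y :=
      h.eq_colon (span_le.2 (Set.singleton_subset_iff.2 hy))
    have e2 : (span R {y} : Submodule R M) ≤ P • span R {y} := by
      calc (span R {y} : Submodule R M) = C • Y := e1
        _ ≤ C • (P • Y) := smul_mono_right C hYP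
        _ = P • (C • Y) := by
            rw [← Submodule.smul_assoc, ← Submodule.smul_assoc, Ideal.smul_eq_mul,
              Ideal.smul_eq_mul, mul_comm]
        _ = P • span R {y} := by rw [← e1]
    exact e2 (mem_span_singleton_self y)
  · right
    push_neg at hcase
    obtain ⟨y, hy, hnle⟩ := hcase
    obtain ⟨a, ha, haP⟩ := SetLike.not_le_iff_exists.1 hnle
    obtain ⟨r, q, hq, hrq⟩ := hP.exists_inv haP
    refine ⟨y, hy, q, hq, fun z hz => ?_⟩
    have h1 : (1 - q) • z = r • (a • z) := by
      rw [smul_smul]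
      congr 1
      linear_combination -hrq
    rw [h1]
    exact Submodule.smul_mem _ r (Submodule.mem_colon.1 ha z hz)

lemma exists_prod_one_sub {ι : Type*} [DecidableEq ι] (s : Finset ι) (P : Ideal R)
    (f : ι → R) (hf : ∀ i ∈ s, f i ∈ P) :
    ∃ p ∈ P, ∏ i ∈ s, (1 - f i) = 1 - p := by
  induction s using Finset.induction_on with
  | empty => exact ⟨0, P.zero_mem, by simp⟩
  | @insert a s hns ih =>
    obtain ⟨p, hp, hprod⟩ := ih fun i hi => hf i (Finset.mem_insert_of_mem hi)
    refine ⟨f a + p - f a * p, ?_, ?_⟩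
    · exact sub_mem (add_mem (hf a (Finset.mem_insert_self a s)) hp)
        (Ideal.mul_mem_right p P (hf a (Finset.mem_insert_self a s)))
    · rw [Finset.prod_insert hns, hprod]; ring

lemma comb {P : Ideal R} {s q : R} (hs : s ∈ P) (hq : q ∈ P) :
    ∃ p ∈ P, (1 - p) = (1 - s) * (1 - q) :=
  ⟨s + q - s * q, sub_mem (add_mem hs hq) (Ideal.mul_mem_right q P hs), by ring⟩

lemma key {X : Submodule R M} {x : M} (hx : x ∈ X)
    (H : ∀ P : Ideal R, P.IsMaximal →
      (∃ p ∈ P, (1 - p) • x = 0) ∨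
      (∃ w ∈ X, ∃ p ∈ P, ∀ y ∈ X, (1 - p) • y ∈ span R {w})) :
    x ∈ ((span R {x} : Submodule R M).colon X) • X := by
  set D := (span R {x} : Submodule R M).colon X with hD
  set J : Ideal R := (D • X).colon (span R {x} : Submodule R M) with hJdef
  have hJ : ∀ r, r ∈ J ↔ r • x ∈ D • X := by
    intro r
    constructor
    · intro h; exact Submodule.mem_colon.1 h x (mem_span_singleton_self x)
    · intro h
      refine Submodule.mem_colon.2 fun z hz => ?_
      obtain ⟨s, rfl⟩ := mem_span_singleton.1 hz
      rw [smul_comm]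
      exact Submodule.smul_mem _ s h
  by_cases hJtop : J = ⊤
  · have h1 : (1 : R) ∈ J := hJtop ▸ Submodule.mem_top
    simpa using (hJ 1).1 h1
  · exfalso
    obtain ⟨P, hP, hJP⟩ := Ideal.exists_le_maximal J hJtop
    rcases H P hP with ⟨p, hp, hpx⟩ | ⟨w, hw, p, hp, hcyc⟩
    · have hmem : (1 - p) ∈ J := (hJ _).2 (by rw [hpx]; exact zero_mem _)
      have h1 : (1 : R) ∈ P := by
        have := add_mem (hJP hmem) hp; simpa using this
      exact hP.ne_top ((Ideal.eq_top_iff_one _).2 h1)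
    · obtain ⟨c, hc⟩ := mem_span_singleton.1 (hcyc x hx)
      set B := (span R {x} : Submodule R M).colon (span R {w} : Submodule R M) with hB
      have hcw : c • w ∈ (span R {x} : Submodule R M) := by
        rw [hc]; exact Submodule.smul_mem _ _ (mem_span_singleton_self x)
      have hcB : c ∈ B := by
        refine Submodule.mem_colon.2 fun z hz => ?_
        obtain ⟨s, rfl⟩ := mem_span_singleton.1 hz
        rw [smul_comm]
        exact Submodule.smul_mem _ s hcw
      have hbD : ∀ b ∈ B, b * (1 - p) ∈ D := by
        intro b hb
        refine Submodule.mem_colon.2 fun y hy => ?_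
        rw [mul_smul]
        exact Submodule.mem_colon.1 hb _ (hcyc y hy)
      have hsq : ((1 - p) * (1 - p)) • x ∈ D • X := by
        have e : ((1 - p) * (1 - p)) • x = (c * (1 - p)) • w := by
          rw [mul_smul, ← hc, smul_smul, mul_comm]
        rw [e]
        exact Submodule.smul_mem_smul (hbD c hcB) hw
      have hmem : (1 - p) * (1 - p) ∈ P := hJP ((hJ _).2 hsq)
      have h1p : (1 - p) ∈ P := (hP.isPrime.mem_or_mem hmem).elim id id
      have h1 : (1 : R) ∈ P := by
        have := add_mem h1p hp; simpa using this
      exact hP.ne_top ((Ideal.eq_top_iff_one _).2 h1)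

lemma mul'_of_cyclic {X : Submodule R M}
    (h : ∀ x ∈ X, x ∈ ((span R {x} : Submodule R M).colon X) • X) : Mul'Sub X := by
  intro K hK
  refine ⟨K.colon X, le_antisymm (fun k hk => ?_) (colon_smul_le K X)⟩
  have hsub : (span R {k} : Submodule R M).colon X ≤ K.colon X := by
    intro r hr
    refine Submodule.mem_colon.2 fun y hy => ?_
    exact (span_le.2 (Set.singleton_subset_iff.2 hk)) (Submodule.mem_colon.1 hr y hy)
  exact Submodule.smul_mono_left hsub (h k (hK hk))

end MultAux

theorem stmt_18 (R : Type*) [CommRing R] (M : Type*) [AddCommGroup M] [Module R M]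
    (L : Submodule R M) {t : ℕ} (N : Fin t → Submodule R M)
    (hL : IsMultiplicationModule R L)
    (hN : ∀ i, IsMultiplicationModule R (N i))
    (hLN : ∀ i, IsMultiplicationModule R ↥(L ⊔ N i))
    (hInt : IsMultiplicationModule R ↥(⨅ i, N i)) :
    IsMultiplicationModule R ↥(L ⊔ ⨅ i, N i) := by
  classical
  open Submodule MultAux in
  rw [isMult_iff_mul'] at hL hInt ⊢
  have hLN' : ∀ i, Mul'Sub (L ⊔ N i) := fun i => (isMult_iff_mul' _).1 (hLN i)
  set Nn : Submodule R M := ⨅ i, N i with hNn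
  set X : Submodule R M := L ⊔ Nn with hX
  have hXY : ∀ i, X ≤ L ⊔ N i := fun i => sup_le_sup_left (iInf_le N i) L
  apply mul'_of_cyclic
  intro x hx
  apply key hx
  intro P hP
  -- dichotomies for each L ⊔ N i
  by_cases htor : ∃ i, ∀ y ∈ L ⊔ N i, ∃ p ∈ P, (1 - p) • y = 0
  · obtain ⟨i, hi⟩ := htor
    exact Or.inl (hi x (hXY i hx))
  · have hcyc : ∀ i, ∃ w ∈ L ⊔ N i, ∃ p ∈ P,
        ∀ y ∈ L ⊔ N i, (1 - p) • y ∈ Submodule.span R {w} := by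
      intro i
      rcases dichotomy (hLN' i) hP with h | h
      · exact absurd ⟨i, h⟩ htor
      · exact h
    -- step 2 : per-index trichotomy
    have step2 : ∀ i, (∃ q ∈ P, ∀ l ∈ L, (1 - q) • l ∈ N i) ∨
        (∃ q ∈ P, ∀ y ∈ L ⊔ N i, (1 - q) • y ∈ L) ∨
        (∃ p ∈ P, (1 - p) • x = 0) := by
      intro i
      obtain ⟨w, hw, p, hp, hcw⟩ := hcyc i
      set C : Ideal R := L.colon ((L ⊔ N i : Submodule R M) : Set M) with hC
      set C' : Ideal R := (N i).colon ((L ⊔ N i : Submodule R M) : Set M) with hC'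
      have hLC : L = C • (L ⊔ N i) := (hLN' i).eq_colon le_sup_left
      have hNC : N i = C' • (L ⊔ N i) := (hLN' i).eq_colon le_sup_right
      have hYsum : (L ⊔ N i : Submodule R M) = (C ⊔ C') • (L ⊔ N i) := by
        rw [Submodule.sup_smul, ← hLC, ← hNC]
      -- extract e ∈ C ⊔ C' with (1-p) • w = e • w
      have hV : (C ⊔ C') • (L ⊔ N i) ≤
          Submodule.comap (LinearMap.lsmul R M (1 - p))
            (Submodule.map (LinearMap.toSpanSingleton R M w) ((C ⊔ C' : Ideal R))) := by
        refine Submodule.smul_le.2 fun a ha y hy => ?_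
        simp only [Submodule.mem_comap, LinearMap.lsmul_apply]
        obtain ⟨s, hs⟩ := Submodule.mem_span_singleton.1 (hcw y hy)
        refine ⟨a * s, Ideal.mul_mem_right s _ ha, ?_⟩
        rw [LinearMap.toSpanSingleton_apply, mul_smul, hs, smul_comm]
      have hwV := hV (hYsum ▸ hw)
      simp only [Submodule.mem_comap, LinearMap.lsmul_apply] at hwV
      obtain ⟨e, he, hew⟩ := hwV
      rw [LinearMap.toSpanSingleton_apply] at hew
      by_cases hCP : C ⊔ C' ≤ P
      · -- w is P-torsion, hence so is x
        refine Or.inr (Or.inr ?_)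
        have heP : e ∈ P := hCP he
        have hw0 : (1 - (p + e)) • w = 0 := by
          have : (1 - (p + e)) • w = (1 - p) • w - e • w := by
            rw [← sub_smul]; congr 1; ring
          rw [this, ← hew, sub_self]
        obtain ⟨c, hc⟩ := Submodule.mem_span_singleton.1 (hcw x (hXY i hx))
        obtain ⟨p', hp', hfac⟩ := comb (add_mem hp heP) hp
        refine ⟨p', hp', ?_⟩
        rw [hfac, mul_smul, ← hc, smul_comm, hw0, smul_zero]
      · obtain ⟨a, haCC, haP⟩ := SetLike.not_le_iff_exists.1 hCP
        obtain ⟨a₁, ha₁, a₂, ha₂, rfl⟩ := Submodule.mem_sup.1 haCC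
        have hor : a₁ ∉ P ∨ a₂ ∉ P := by
          by_contra hcon
          push_neg at hcon
          exact haP (add_mem hcon.1 hcon.2)
        rcases hor with h1 | h2
        · -- (1-q) • (L ⊔ N i) ⊆ L
          obtain ⟨r, q, hq, hrq⟩ := hP.exists_inv h1
          refine Or.inr (Or.inl ⟨q, hq, fun y hy => ?_⟩)
          have e1 : (1 - q) • y = r • (a₁ • y) := by
            rw [smul_smul]; congr 1; linear_combination -hrq
          rw [e1]
          exact L.smul_mem r (Submodule.mem_colon.1 ha₁ y hy)
        · -- (1-q) • L ⊆ N i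
          obtain ⟨r, q, hq, hrq⟩ := hP.exists_inv h2
          refine Or.inl ⟨q, hq, fun l hl => ?_⟩
          have e1 : (1 - q) • l = r • (a₂ • l) := by
            rw [smul_smul]; congr 1; linear_combination -hrq
          rw [e1]
          exact (N i).smul_mem r (Submodule.mem_colon.1 ha₂ l (Submodule.mem_sup_left hl))
    -- step 3 : assemble
    by_cases hthird : ∃ _i : Fin t, ∃ p ∈ P, (1 - p) • x = 0
    · obtain ⟨_, p, hp, h0⟩ := hthird
      exact Or.inl ⟨p, hp, h0⟩
    · by_cases hsec : ∃ i, ∃ q ∈ P, ∀ y ∈ L ⊔ N i, (1 - q) • y ∈ L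
      · obtain ⟨i, q, hq, habs⟩ := hsec
        rcases dichotomy hL hP with hLt | ⟨l₀, hl₀, s, hs, hLc⟩
        · -- L is P-torsion
          obtain ⟨s, hs, h0⟩ := hLt _ (habs x (hXY i hx))
          obtain ⟨p', hp', hfac⟩ := comb hs hq
          exact Or.inl ⟨p', hp', by rw [hfac, mul_smul, h0]⟩
        · -- L is P-cyclic, generator l₀ ∈ L ≤ X
          obtain ⟨p', hp', hfac⟩ := comb hs hq
          refine Or.inr ⟨l₀, (le_sup_left : L ≤ X) hl₀, p', hp', fun y hy => ?_⟩
          rw [hfac, mul_smul]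
          exact hLc _ (habs y (hXY i hy))
      · -- every index absorbs L into N i mod P
        have hfirst : ∀ i, ∃ q ∈ P, ∀ l ∈ L, (1 - q) • l ∈ N i := by
          intro i
          rcases step2 i with h | h | h
          · exact h
          · exact absurd ⟨i, h⟩ hsec
          · exact absurd ⟨i, h⟩ hthird
        choose qf hqf hqf2 using hfirst
        obtain ⟨Q, hQ, hprod⟩ := exists_prod_one_sub Finset.univ P qf fun i _ => hqf i
        have habsN : ∀ y ∈ X, (1 - Q) • y ∈ Nn := by
          intro y hy
          obtain ⟨l, hl, n, hn, rfl⟩ := Submodule.mem_sup.1 hy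
          have h1 : (1 - Q) • l ∈ Nn := by
            rw [← hprod, hNn, Submodule.mem_iInf]
            intro i
            rw [← Finset.mul_prod_erase Finset.univ _ (Finset.mem_univ i), mul_smul]
            exact hqf2 i _ (L.smul_mem _ hl)
          have h2 : (1 - Q) • n ∈ Nn := Nn.smul_mem _ hn
          rw [smul_add]
          exact add_mem h1 h2
        rcases dichotomy hInt hP with hNt | ⟨n₀, hn₀, s, hs, hNc⟩
        · obtain ⟨s, hs, h0⟩ := hNt _ (habsN x hx)
          obtain ⟨p', hp', hfac⟩ := comb hs hQ
          exact Or.inl ⟨p', hp', by rw [hfac, mul_smul, h0]⟩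
        · obtain ⟨p', hp', hfac⟩ := comb hs hQ
          refine Or.inr ⟨n₀, (le_sup_right : Nn ≤ X) hn₀, p', hp', fun y hy => ?_⟩
          rw [hfac, mul_smul]
          exact hNc _ (habsN y hy)
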